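/- For any n×n symmetric positive definite matrices X, Y, A, M: tr((X^{1/2} M^{-1} Y M^{-1} X^{1/2})^{1/2}) ≤ (1/2)(tr(X A) + tr(M^{-1} Y M^{-1} A^{-1})), with equality for some SPD A; consequently tr((X^{1/2} M^{-1} Y M^{-1} X^{1/2})^{1/2}) = min over SPD A of (1/2) tr(X A + M^{-1} Y M^{-1} A^{-1}). -/

import Mathlib

open Matrix

private lemma posDef_conj' {n : Type*} [Fintype n] [DecidableEq n] {P B : Matrix n n ℝ}
    (hP : P.PosDef) (hB : IsUnit B.det) : (Bᴴ * P * B).PosDef := by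
  rw [Matrix.posDef_iff_dotProduct_mulVec]
  constructor
  · exact Matrix.isHermitian_conjTranspose_mul_mul B hP.1
  · intro x hx
    have hBx : B *ᵥ x ≠ 0 := by
      intro h
      apply hx
      have h2 := congrArg (fun v => B⁻¹ *ᵥ v) h
      simpa [Matrix.mulVec_mulVec, Matrix.nonsing_inv_mul _ hB] using h2
    simpa only [Matrix.star_mulVec, Matrix.dotProduct_mulVec, Matrix.vecMul_vecMul] using
      hP.dotProduct_mulVec_pos hBx

private lemma trace_nonneg' {n : Type*} [Fintype n] [DecidableEq n] {A : Matrix n n ℝ}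
    (hA : A.PosSemidef) : 0 ≤ A.trace := by
  rw [Matrix.trace]
  apply Finset.sum_nonneg
  intro i _
  have := hA.dotProduct_mulVec_nonneg (Pi.single i 1)
  simpa [dotProduct, Matrix.mulVec, Pi.single_apply, Finset.sum_ite_eq,
    Matrix.diag] using this

/-- tr((X^{1/2} M⁻¹ Y M⁻¹ X^{1/2})^{1/2}) = min over SPD A of
(1/2) tr(X A + M⁻¹ Y M⁻¹ A⁻¹), the bound holding for all SPD A with equality attained. -/
theorem stmt9 {n : Type*} [Fintype n] [DecidableEq n]
    (X Y M sqX S : Matrix n n ℝ)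
    (hX : X.PosDef) (hY : Y.PosDef) (hM : M.PosDef)
    (hsqX : sqX.PosDef) (hsqX2 : sqX * sqX = X)
    (hS : S.PosDef) (hS2 : S * S = sqX * M⁻¹ * Y * M⁻¹ * sqX) :
    IsLeast
      {v : ℝ | ∃ A : Matrix n n ℝ, A.PosDef ∧
        v = (1 / 2) * ((X * A).trace + (M⁻¹ * Y * M⁻¹ * A⁻¹).trace)}
      S.trace := by
  have hdX : IsUnit sqX.det := isUnit_iff_ne_zero.mpr hsqX.det_pos.ne'
  have hdS : IsUnit S.det := isUnit_iff_ne_zero.mpr hS.det_pos.ne'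
  have hu1 : sqX * sqX⁻¹ = 1 := Matrix.mul_nonsing_inv _ hdX
  have hu2 : sqX⁻¹ * sqX = 1 := Matrix.nonsing_inv_mul _ hdX
  have hsu1 : S * S⁻¹ = 1 := Matrix.mul_nonsing_inv _ hdS
  have hsqXH : sqXᴴ = sqX := hsqX.isHermitian
  have hsqXiH : (sqX⁻¹)ᴴ = sqX⁻¹ := hsqX.inv.isHermitian
  constructor
  · -- membership: A = sqX⁻¹ * S * sqX⁻¹ attains equality
    refine ⟨sqX⁻¹ * S * sqX⁻¹, ?_, ?_⟩
    · have hdXi : IsUnit (sqX⁻¹).det := isUnit_iff_ne_zero.mpr hsqX.inv.det_pos.ne'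
      have := posDef_conj' hS hdXi
      rwa [hsqXiH] at this
    · have hA0inv : (sqX⁻¹ * S * sqX⁻¹)⁻¹ = sqX * S⁻¹ * sqX := by
        rw [Matrix.mul_inv_rev, Matrix.mul_inv_rev,
          Matrix.nonsing_inv_nonsing_inv _ hdX]
        noncomm_ring
      have h1 : (X * (sqX⁻¹ * S * sqX⁻¹)).trace = S.trace := by
        have : X * (sqX⁻¹ * S * sqX⁻¹) = sqX * S * sqX⁻¹ := by
          rw [← hsqX2]
          calc sqX * sqX * (sqX⁻¹ * S * sqX⁻¹)
              = sqX * (sqX * sqX⁻¹) * S * sqX⁻¹ := by noncomm_ring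
            _ = sqX * S * sqX⁻¹ := by rw [hu1]; noncomm_ring
        rw [this, Matrix.trace_mul_comm (sqX * S) sqX⁻¹, ← Matrix.mul_assoc, hu2, Matrix.one_mul]
      have h2 : (M⁻¹ * Y * M⁻¹ * (sqX⁻¹ * S * sqX⁻¹)⁻¹).trace = S.trace := by
        rw [hA0inv]
        have h3 : sqX * (M⁻¹ * Y * M⁻¹) * sqX = S * S := by
          rw [hS2]; noncomm_ring
        rw [show M⁻¹ * Y * M⁻¹ * (sqX * S⁻¹ * sqX)
            = (M⁻¹ * Y * M⁻¹ * sqX * S⁻¹) * sqX from by noncomm_ring,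
          Matrix.trace_mul_comm,
          show sqX * (M⁻¹ * Y * M⁻¹ * sqX * S⁻¹)
            = (sqX * (M⁻¹ * Y * M⁻¹) * sqX) * S⁻¹ from by noncomm_ring,
          h3, Matrix.mul_assoc, hsu1, Matrix.mul_one]
      rw [h1, h2]; ring
  · -- lower bound
    rintro v ⟨A, hA, rfl⟩
    have hdA : IsUnit A.det := isUnit_iff_ne_zero.mpr hA.det_pos.ne'
    set B := sqX * A * sqX with hBdef
    have hB : B.PosDef := by
      have := posDef_conj' hA hdX
      rwa [hsqXH] at this
    have hdB : IsUnit B.det := isUnit_iff_ne_zero.mpr hB.det_pos.ne'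
    have hub1 : B * B⁻¹ = 1 := Matrix.mul_nonsing_inv _ hdB
    have hub2 : B⁻¹ * B = 1 := Matrix.nonsing_inv_mul _ hdB
    have hBinv : B⁻¹ = sqX⁻¹ * A⁻¹ * sqX⁻¹ := by
      rw [hBdef, Matrix.mul_inv_rev, Matrix.mul_inv_rev]; noncomm_ring
    -- tr(X A) = tr B
    have h1 : (X * A).trace = B.trace := by
      rw [← hsqX2, hBdef, Matrix.mul_assoc, Matrix.trace_mul_comm sqX (sqX * A)]
    -- tr(N A⁻¹) = tr(S * B⁻¹ * S)
    have h2 : (M⁻¹ * Y * M⁻¹ * A⁻¹).trace = (S * B⁻¹ * S).trace := by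
      have e1 : sqX * (M⁻¹ * Y * M⁻¹ * A⁻¹) * sqX⁻¹ = S * S * B⁻¹ := by
        rw [hBinv]
        have h3 : sqX * (M⁻¹ * Y * M⁻¹) * sqX = S * S := by
          rw [hS2]; noncomm_ring
        calc sqX * (M⁻¹ * Y * M⁻¹ * A⁻¹) * sqX⁻¹
            = sqX * (M⁻¹ * Y * M⁻¹) * sqX * (sqX⁻¹ * A⁻¹ * sqX⁻¹) := by
              rw [show sqX * (M⁻¹ * Y * M⁻¹) * sqX * (sqX⁻¹ * A⁻¹ * sqX⁻¹)
                  = sqX * (M⁻¹ * Y * M⁻¹) * (sqX * sqX⁻¹) * A⁻¹ * sqX⁻¹ by noncomm_ring,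
                hu1]
              noncomm_ring
          _ = S * S * (sqX⁻¹ * A⁻¹ * sqX⁻¹) := by rw [h3]
      have e2 : (sqX * (M⁻¹ * Y * M⁻¹ * A⁻¹) * sqX⁻¹).trace
          = (M⁻¹ * Y * M⁻¹ * A⁻¹).trace := by
        rw [Matrix.mul_assoc, Matrix.trace_mul_comm sqX, Matrix.mul_assoc, hu2,
          Matrix.mul_one]
      calc (M⁻¹ * Y * M⁻¹ * A⁻¹).trace
          = (sqX * (M⁻¹ * Y * M⁻¹ * A⁻¹) * sqX⁻¹).trace := e2.symm
        _ = (S * S * B⁻¹).trace := by rw [e1]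
        _ = (S * B⁻¹ * S).trace := by
            rw [Matrix.mul_assoc, Matrix.trace_mul_comm S (S * B⁻¹), Matrix.mul_assoc]
    -- AM-GM: tr B + tr(S B⁻¹ S) - 2 tr S = tr((B-S) B⁻¹ (B-S)) ≥ 0
    have hexp : (B - S) * B⁻¹ * (B - S) = B - S - S + S * B⁻¹ * S := by
      have : (B - S) * B⁻¹ * (B - S)
          = B * B⁻¹ * B - B * B⁻¹ * S - S * B⁻¹ * B + S * B⁻¹ * S := by noncomm_ring
      rw [this, hub1, Matrix.one_mul, Matrix.one_mul,
        Matrix.mul_assoc S B⁻¹ B, hub2, Matrix.mul_one]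
    have hpsd : ((B - S) * B⁻¹ * (B - S)).PosSemidef := by
      have hH : (B - S)ᴴ = B - S := by
        rw [Matrix.conjTranspose_sub, hB.isHermitian, hS.isHermitian]
      have := hB.inv.posSemidef.mul_mul_conjTranspose_same (B - S)
      rwa [hH] at this
    have htr : 0 ≤ B.trace + (S * B⁻¹ * S).trace - 2 * S.trace := by
      have h0 := trace_nonneg' hpsd
      rw [hexp] at h0
      simp only [Matrix.trace_add, Matrix.trace_sub] at h0
      linarith
    rw [h1, h2]
    linarith
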